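/- Fix a nonzero real number λ. For all integers n ≥ 1 and r ≥ 1: n! · H^{(r)}_{n,λ} = [n+r brack r+1]_{r,λ}, i.e., the degenerate hyperharmonic number H^{(r)}_{n,λ} times n! equals the degenerate unsigned r-Stirling number of the first kind with parameters (n+r, r+1). -/

import Mathlib

open Finset

noncomputable section

/-- The generalized binomial coefficient `C(x,k) = x(x-1)⋯(x-k+1)/k!`. -/
def gbinom (x : ℝ) (k : ℕ) : ℝ := (∏ i ∈ Finset.range k, (x - i)) / k.factorial

/-- The degenerate harmonic numbers `H_{n,λ} = ∑_{k=1}^n (-1)^{k-1} (1/λ) C(λ,k)`,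
with `H_{0,λ} = 0`. -/
def dH (lam : ℝ) (n : ℕ) : ℝ :=
  ∑ k ∈ Finset.Icc 1 n, (-1 : ℝ) ^ (k - 1) * (1 / lam) * gbinom lam k

/-- The degenerate hyperharmonic numbers: `H^{(1)}_{n,λ} = H_{n,λ}`, `H^{(r)}_{0,λ} = 0`, and
`H^{(r)}_{n,λ} = ∑_{k=1}^n H^{(r-1)}_{k,λ}` for `r ≥ 2`, `n ≥ 1`.
(The value at `r = 0` is junk.) -/
def dHyper (lam : ℝ) : ℕ → ℕ → ℝ
  | 0, _ => 0
  | 1, n => dH lam n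
  | (r + 2), n => ∑ k ∈ Finset.Icc 1 n, dHyper lam (r + 1) k

/-- The rising factorial `⟨x⟩_n = x(x+1)⋯(x+n-1)`. -/
def rise (x : ℝ) (n : ℕ) : ℝ := ∏ i ∈ Finset.range n, (x + i)

/-- The degenerate rising factorial `⟨x⟩_{n,λ} = x(x+λ)⋯(x+(n-1)λ)`. -/
def drise (lam x : ℝ) (n : ℕ) : ℝ := ∏ i ∈ Finset.range n, (x + i * lam)

lemma rise_zero (x : ℝ) : rise x 0 = 1 := by simp [rise]

lemma rise_succ (x : ℝ) (n : ℕ) : rise x (n + 1) = rise x n * (x + n) := by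
  simp [rise, Finset.prod_range_succ]

lemma rise_succ' (x : ℝ) (n : ℕ) : rise x (n + 1) = x * rise (x + 1) n := by
  rw [rise, Finset.prod_range_succ', rise]
  have h : ∀ i ∈ Finset.range n, (x + ((i + 1 : ℕ) : ℝ)) = (x + 1) + (i : ℝ) := by
    intro i _; push_cast; ring
  rw [Finset.prod_congr rfl h]
  push_cast
  ring

lemma hockey (x : ℝ) : ∀ n : ℕ,
    ∑ k ∈ Finset.Icc 1 n, rise x k / k.factorial = rise (x + 1) n / n.factorial - 1 := by
  intro n
  induction n with
  | zero => simp [rise_zero]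
  | succ n ih =>
    rw [Finset.sum_Icc_succ_top (by omega : 1 ≤ n + 1), ih, rise_succ' x n,
      rise_succ (x+1) n, Nat.factorial_succ]
    have h1 : (n.factorial : ℝ) ≠ 0 := Nat.cast_ne_zero.2 n.factorial_ne_zero
    field_simp
    push_cast
    ring

lemma dH_succ (lam : ℝ) (n : ℕ) :
    dH lam (n + 1) = dH lam n + (-1 : ℝ) ^ n * (1 / lam) * gbinom lam (n + 1) := by
  rw [dH, Finset.sum_Icc_succ_top (by omega : 1 ≤ n + 1), dH]
  norm_num

lemma prod_key (lam : ℝ) (n : ℕ) :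
    (-1 : ℝ) ^ n * ∏ i ∈ Finset.range (n + 1), (lam - i) = lam * rise (1 - lam) n := by
  rw [Finset.prod_range_succ']
  have h : ∀ i ∈ Finset.range n, (lam - ((i + 1 : ℕ) : ℝ)) = (-1) * (1 - lam + (i : ℝ)) := by
    intro i _; push_cast; ring
  rw [Finset.prod_congr rfl h, Finset.prod_mul_distrib, Finset.prod_const, Finset.card_range, rise]
  have h4 : ((-1 : ℝ)) ^ n * (-1) ^ n = 1 := by rw [← mul_pow]; norm_num
  push_cast
  linear_combination (lam * ∏ i ∈ Finset.range n, (1 - lam + (i : ℝ))) * h4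

lemma base_case (lam : ℝ) (hlam : lam ≠ 0) : ∀ n : ℕ,
    lam * n.factorial * dH lam n = rise 1 n - rise (1 - lam) n := by
  intro n
  induction n with
  | zero => simp [dH, rise_zero]
  | succ n ih =>
    rw [dH_succ, rise_succ 1 n, rise_succ (1 - lam) n]
    have h1 : (n.factorial : ℝ) ≠ 0 := Nat.cast_ne_zero.2 n.factorial_ne_zero
    have h2 : ((n+1).factorial : ℝ) * gbinom lam (n+1) = ∏ i ∈ Finset.range (n+1), (lam - i) := by
      rw [gbinom]
      field_simp
    have h3 := prod_key lam n
    have hL : lam * ((n+1).factorial : ℝ) * (dH lam n + (-1:ℝ)^n * (1/lam) * gbinom lam (n+1))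
        = ((n:ℝ)+1) * (lam * n.factorial * dH lam n)
          + (-1:ℝ)^n * (((n+1).factorial : ℝ) * gbinom lam (n+1)) := by
      rw [Nat.factorial_succ]
      push_cast
      field_simp
    rw [hL, ih, h2]
    linear_combination h3

lemma dHyper_succ (lam : ℝ) (r : ℕ) (hr : 1 ≤ r) (n : ℕ) :
    dHyper lam (r + 1) n = ∑ k ∈ Finset.Icc 1 n, dHyper lam r k := by
  obtain ⟨s, rfl⟩ : ∃ s, r = s + 1 := ⟨r - 1, by omega⟩
  rfl

lemma main_lemma (lam : ℝ) (hlam : lam ≠ 0) : ∀ r : ℕ, 1 ≤ r → ∀ n : ℕ,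
    lam * n.factorial * dHyper lam r n = rise r n - rise (r - lam) n := by
  intro r hr
  induction r, hr using Nat.le_induction with
  | base =>
    intro n
    have : dHyper lam 1 n = dH lam n := rfl
    rw [this, base_case lam hlam n]
    norm_num
  | succ r hr ih =>
    intro n
    rw [dHyper_succ lam r hr n]
    have hk : ∀ k : ℕ, dHyper lam r k = (rise r k - rise (r - lam) k) / (lam * k.factorial) := by
      intro k
      have hkf : (lam * (k.factorial : ℝ)) ≠ 0 :=
        mul_ne_zero hlam (Nat.cast_ne_zero.2 k.factorial_ne_zero)
      rw [eq_div_iff hkf, ← ih k]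
      ring
    have h2 : ∑ k ∈ Finset.Icc 1 n, dHyper lam r k
        = (1/lam) * ((∑ k ∈ Finset.Icc 1 n, rise r k / k.factorial)
          - ∑ k ∈ Finset.Icc 1 n, rise (r - lam) k / k.factorial) := by
      rw [← Finset.sum_sub_distrib, Finset.mul_sum]
      apply Finset.sum_congr rfl
      intro k _
      rw [hk k]
      have hkf : ((k.factorial : ℝ)) ≠ 0 := Nat.cast_ne_zero.2 k.factorial_ne_zero
      field_simp
    rw [h2, hockey, hockey]
    have e1 : ((r : ℝ) + 1) = ((r + 1 : ℕ) : ℝ) := by push_cast; ring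
    have e2 : ((r : ℝ) - lam + 1) = ((r + 1 : ℕ) : ℝ) - lam := by push_cast; ring
    rw [e1, e2]
    have h1 : (n.factorial : ℝ) ≠ 0 := Nat.cast_ne_zero.2 n.factorial_ne_zero
    field_simp
    ring

/-- for `n ≥ 1`, `r ≥ 1`, `n! H^{(r)}_{n,λ} = [n+r brack r+1]_{r,λ}`, where
`B n k` denotes the degenerate unsigned `r`-Stirling number of the first kind
`[n+r brack k+r]_{r,λ}`, characterized by `⟨x+r⟩_n = ∑_{k=0}^n B n k ⟨x⟩_{k,λ}`;
thus `[n+r brack r+1]_{r,λ} = B n 1`. -/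
theorem statement_10 (lam : ℝ) (hlam : lam ≠ 0) (r : ℕ) (hr : 1 ≤ r)
    (B : ℕ → ℕ → ℝ)
    (hB : ∀ (n : ℕ) (x : ℝ),
      rise (x + r) n = ∑ k ∈ Finset.range (n + 1), B n k * drise lam x k)
    (n : ℕ) (hn : 1 ≤ n) :
    (n.factorial : ℝ) * dHyper lam r n = B n 1 := by
  -- B n 0 = rise r n
  have hB0 : B n 0 = rise r n := by
    have h := hB n 0
    rw [Finset.sum_eq_single_of_mem 0 (Finset.mem_range.2 (by omega))
      (fun k _ hk => by
        have : drise lam 0 k = 0 := by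
          obtain ⟨s, rfl⟩ : ∃ s, k = s + 1 := ⟨k - 1, by omega⟩
          exact Finset.prod_eq_zero (Finset.mem_range.2 (by omega : 0 < s + 1)) (by norm_num)
        rw [this, mul_zero])] at h
    have : drise lam 0 0 = 1 := by simp [drise]
    rw [this, mul_one] at h
    have e : (0 : ℝ) + (r : ℝ) = (r : ℝ) := by ring
    rw [e] at h
    exact h.symm
  -- evaluate at x = -lam
  have hB1 : rise ((r : ℝ) - lam) n = B n 0 - lam * B n 1 := by
    have h := hB n (-lam)
    have hsplit : ∑ k ∈ Finset.range (n + 1), B n k * drise lam (-lam) k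
        = (∑ k ∈ Finset.range 2, B n k * drise lam (-lam) k)
          + ∑ k ∈ Finset.Ico 2 (n + 1), B n k * drise lam (-lam) k :=
      (Finset.sum_range_add_sum_Ico _ (by omega)).symm
    have hzero : ∑ k ∈ Finset.Ico 2 (n + 1), B n k * drise lam (-lam) k = 0 := by
      apply Finset.sum_eq_zero
      intro k hk
      have hk2 : 2 ≤ k := (Finset.mem_Ico.1 hk).1
      have : drise lam (-lam) k = 0 :=
        Finset.prod_eq_zero (Finset.mem_range.2 (by omega : 1 < k)) (by push_cast; ring)
      rw [this, mul_zero]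
    have hd0 : drise lam (-lam) 0 = 1 := by simp [drise]
    have hd1 : drise lam (-lam) 1 = -lam := by simp [drise]
    rw [hsplit, hzero, Finset.sum_range_succ, Finset.sum_range_one, hd0, hd1] at h
    have e : (-lam + (r : ℝ)) = (r : ℝ) - lam := by ring
    rw [e] at h
    rw [h]
    ring
  have hm := main_lemma lam hlam r hr n
  rw [hB1, hB0] at hm
  have : lam * ((n.factorial : ℝ) * dHyper lam r n) = lam * B n 1 := by
    rw [← mul_assoc, hm]; ring
  exact mul_left_cancel₀ hlam this
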